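/- Let μ and ν be probability measures on ℝ, with μ having finite variance σ_E², and let λ and γ be their characteristic functions. Fix ω > 0 and x ∈ (0, π), and suppose the characteristic-function uncertainty relation |γ(ω)|² + |λ(x/ω)|² ≤ β(x) holds, where β(x) = 2√2 (√2 − √(1 − cos x)) / (1 + cos x). Then σ_E² ≥ (ω²/x²) (1 − β(x) + |γ(ω)|²). -/

import Mathlib

open MeasureTheory Real

/-- The bound function of the characteristic-function uncertainty relation of Rudnicki (2016). -/
noncomputable def rudnickiBeta (x : ℝ) : ℝ :=
  2 * Real.sqrt 2 * (Real.sqrt 2 - Real.sqrt (1 - Real.cos x)) / (1 + Real.cos x)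

/-- The characteristic function of a measure on `ℝ`. -/
noncomputable def charFunction (μ : Measure ℝ) (ω : ℝ) : ℂ :=
  ∫ E, Complex.exp (Complex.I * ω * E) ∂μ

lemma exp_I_mul_integrable (μ : Measure ℝ) [IsProbabilityMeasure μ] (t c : ℝ) :
    Integrable (fun E : ℝ => Complex.exp (Complex.I * t * (E - c))) μ := by
  apply Integrable.mono' (integrable_const 1)
  · exact (Continuous.cexp (by continuity)).aestronglyMeasurable
  · filter_upwards with E
    have : Complex.I * t * (E - c) = ((t * (E - c) : ℝ) : ℂ) * Complex.I := by
      push_cast; ring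
    rw [this]
    simp only [Complex.norm_exp_ofReal_mul_I, le_refl, one_mul]

lemma charNorm_le_one (μ : Measure ℝ) [IsProbabilityMeasure μ] (t : ℝ) :
    ‖charFunction μ t‖ ≤ 1 := by
  calc ‖charFunction μ t‖ ≤ ∫ E, ‖Complex.exp (Complex.I * t * E)‖ ∂μ :=
        norm_integral_le_integral_norm _
    _ = 1 := by
        have : ∀ E : ℝ, ‖Complex.exp (Complex.I * t * E)‖ = 1 := by
          intro E
          have : Complex.I * t * E = ((t * E : ℝ) : ℂ) * Complex.I := by push_cast; ring
          rw [this]; simp only [Complex.norm_exp_ofReal_mul_I, le_refl, one_mul]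
        simp [this]

lemma one_sub_norm_char_le (μ : Measure ℝ) [IsProbabilityMeasure μ]
    (h2 : Integrable (fun E => E ^ 2) μ) (t : ℝ) :
    1 - ‖charFunction μ t‖ ≤ t ^ 2 / 2 * ((∫ E, E ^ 2 ∂μ) - (∫ E, E ∂μ) ^ 2) := by
  have hid : Integrable (fun E : ℝ => E) μ := by
    have := (memLp_two_iff_integrable_sq (aestronglyMeasurable_id (μ := μ))).2 h2
    exact this.integrable (by norm_num)
  set m : ℝ := ∫ E, E ∂μ with hm
  have hsq : Integrable (fun E : ℝ => (E - m) ^ 2) μ := by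
    have : (fun E : ℝ => (E - m) ^ 2) = fun E => E ^ 2 - (2 * m) * E + m ^ 2 := by
      funext E; ring
    rw [this]
    exact (h2.sub (hid.const_mul _)).add (integrable_const _)
  have hVar : (∫ E, (E - m) ^ 2 ∂μ) = (∫ E, E ^ 2 ∂μ) - m ^ 2 := by
    have : (fun E : ℝ => (E - m) ^ 2) = fun E => E ^ 2 - (2 * m) * E + m ^ 2 := by
      funext E; ring
    have hA : Integrable (fun E : ℝ => E ^ 2 - 2 * m * E) μ := h2.sub (hid.const_mul (2 * m))
    rw [this, integral_add hA (integrable_const _),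
      integral_sub h2 (hid.const_mul (2 * m)), integral_const_mul, integral_const]
    simp [← hm]; ring
  -- shift-invariance of the modulus
  have hshift : ‖charFunction μ t‖ = ‖∫ E, Complex.exp (Complex.I * t * (E - m)) ∂μ‖ := by
    have : charFunction μ t
        = Complex.exp (Complex.I * t * m) * ∫ E, Complex.exp (Complex.I * t * (E - m)) ∂μ := by
      rw [← integral_const_mul]
      unfold charFunction
      congr 1; funext E
      rw [← Complex.exp_add]
      congr 1; push_cast; ring
    rw [this, norm_mul]
    have : Complex.I * t * m = ((t * m : ℝ) : ℂ) * Complex.I := by push_cast; ring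
    rw [this]
    simp only [Complex.norm_exp_ofReal_mul_I, le_refl, one_mul]
  have hcos_int : Integrable (fun E : ℝ => Real.cos (t * (E - m))) μ := by
    apply Integrable.mono' (integrable_const 1)
    · exact (Real.continuous_cos.comp (by continuity)).aestronglyMeasurable
    · filter_upwards with E; simp [abs_le]; constructor <;> nlinarith [Real.neg_one_le_cos (t * (E - m)), Real.cos_le_one (t * (E - m))]
  have hre : (∫ E, Real.cos (t * (E - m)) ∂μ) ≤ ‖charFunction μ t‖ := by
    rw [hshift]
    have h1 : (∫ E, Real.cos (t * (E - m)) ∂μ)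
        = (∫ E, Complex.exp (Complex.I * t * (E - m)) ∂μ).re := by
      have h0 := integral_re (exp_I_mul_integrable μ t m)
      simp only [RCLike.re_to_complex] at h0
      rw [← h0]
      congr 1; funext E
      have : Complex.I * t * (E - m) = ((t * (E - m) : ℝ) : ℂ) * Complex.I := by
        push_cast; ring
      rw [this, Complex.exp_ofReal_mul_I_re]
    rw [h1]
    exact Complex.re_le_norm _
  have hpt : ∀ E : ℝ, 1 - Real.cos (t * (E - m)) ≤ t ^ 2 / 2 * (E - m) ^ 2 := by
    intro E
    have := Real.one_sub_sq_div_two_le_cos (x := t * (E - m))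
    nlinarith
  have hmono : (∫ E, (1 - Real.cos (t * (E - m))) ∂μ)
      ≤ ∫ E, t ^ 2 / 2 * (E - m) ^ 2 ∂μ :=
    integral_mono ((integrable_const 1).sub hcos_int) (hsq.const_mul _) hpt
  have h1c : (∫ E, (1 - Real.cos (t * (E - m))) ∂μ)
      = 1 - ∫ E, Real.cos (t * (E - m)) ∂μ := by
    rw [integral_sub (integrable_const 1) hcos_int]; simp
  rw [← hVar]
  calc 1 - ‖charFunction μ t‖ ≤ 1 - ∫ E, Real.cos (t * (E - m)) ∂μ := by linarith
    _ ≤ ∫ E, t ^ 2 / 2 * (E - m) ^ 2 ∂μ := by rw [← h1c]; exact hmono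
    _ = t ^ 2 / 2 * ∫ E, (E - m) ^ 2 ∂μ := integral_const_mul _ _

/-- If the characteristic-function uncertainty relation
`|γ(ω)|² + |λ(x/ω)|² ≤ β(x)` holds for some `ω > 0` and `x ∈ (0, π)`, then the variance
of `μ` satisfies `σ_E² ≥ (ω²/x²)(1 - β(x) + |γ(ω)|²)`. -/
theorem stmt_4 (μ ν : Measure ℝ) [IsProbabilityMeasure μ] [IsProbabilityMeasure ν]
    (h2 : Integrable (fun E => E ^ 2) μ)
    (ω x : ℝ) (hω : 0 < ω) (hx : x ∈ Set.Ioo 0 π)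
    (hChUR : ‖charFunction ν ω‖ ^ 2 + ‖charFunction μ (x / ω)‖ ^ 2 ≤ rudnickiBeta x) :
    (ω ^ 2 / x ^ 2) * (1 - rudnickiBeta x + ‖charFunction ν ω‖ ^ 2)
      ≤ (∫ E, E ^ 2 ∂μ) - (∫ E, E ∂μ) ^ 2 := by
  obtain ⟨hx0, hxπ⟩ := hx
  set t : ℝ := x / ω with ht
  set V : ℝ := (∫ E, E ^ 2 ∂μ) - (∫ E, E ∂μ) ^ 2 with hV
  have hL1 : ‖charFunction μ t‖ ≤ 1 := charNorm_le_one μ t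
  have hL0 : (0:ℝ) ≤ ‖charFunction μ t‖ := norm_nonneg _
  have hkey : 1 - ‖charFunction μ t‖ ≤ t ^ 2 / 2 * V := one_sub_norm_char_le μ h2 t
  have hsq : 1 - ‖charFunction μ t‖ ^ 2 ≤ t ^ 2 * V := by nlinarith
  have hG : 1 - rudnickiBeta x + ‖charFunction ν ω‖ ^ 2 ≤ 1 - ‖charFunction μ t‖ ^ 2 := by
    linarith
  have ht2 : t ^ 2 = x ^ 2 / ω ^ 2 := by rw [ht]; field_simp
  have hpos : (0:ℝ) < ω ^ 2 / x ^ 2 := by positivity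
  calc (ω ^ 2 / x ^ 2) * (1 - rudnickiBeta x + ‖charFunction ν ω‖ ^ 2)
      ≤ (ω ^ 2 / x ^ 2) * (t ^ 2 * V) := by
        apply mul_le_mul_of_nonneg_left (hG.trans hsq) hpos.le
    _ = V := by rw [ht2]; field_simp
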